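/- Suppose h: ℝ^q → ℝ is defined from a parameterized autocovariance γ·(θ) and the map θ ↦ (γ_{k₁}(θ),…,γ_{k_m}(θ)) is injective on the parameter space Θ. If the collection of lags selected in the composite likelihood includes k₁,…,k_m, then θ₀ is the unique maximizer of θ ↦ E_{θ₀}[∑_j log f_{k_j}(Y^{k_j}; θ)], where f_{k_j} is the Gaussian density of the subvector of Y indexed by the tuple k_j. -/

import Mathlib

open MeasureTheory Matrix

/-- Density of a mean-zero multivariate Gaussian with covariance matrix `S`. -/
noncomputable def mvGaussianPdf {q : ℕ} (S : Matrix (Fin q) (Fin q) ℝ)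
    (y : Fin q → ℝ) : ℝ :=
  (2 * Real.pi) ^ (-(q : ℝ) / 2) * S.det ^ (-(1 : ℝ) / 2) *
    Real.exp (-(1 / 2) * (y ⬝ᵥ (S⁻¹ *ᵥ y)))

section Auxiliary

open Real Set
open scoped MatrixOrder

/-! ### One-dimensional Gaussian moment lemmas -/

private lemma gcl_e0 : ∫ t : ℝ, Real.exp (-(1/2) * t^2) = Real.sqrt (2*π) := by
  rw [integral_gaussian]
  rw [show π / (1/2 : ℝ) = 2 * π by ring]

private lemma gcl_i0 : Integrable fun t : ℝ => Real.exp (-(1/2) * t^2) :=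
  integrable_exp_neg_mul_sq (by norm_num)

private lemma gcl_i1 : Integrable fun t : ℝ => t * Real.exp (-(1/2) * t^2) :=
  integrable_mul_exp_neg_mul_sq (by norm_num)

private lemma gcl_i2 : Integrable fun t : ℝ => t^2 * Real.exp (-(1/2) * t^2) := by
  have := integrable_rpow_mul_exp_neg_mul_sq (b := 1/2) (by norm_num) (s := 2) (by norm_num)
  simpa [Real.rpow_natCast] using this

private lemma gcl_e1 : ∫ t : ℝ, t * Real.exp (-(1/2) * t^2) = 0 := by
  have h := integral_neg_eq_self (fun t : ℝ => t * Real.exp (-(1/2) * t^2)) (volume : Measure ℝ)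
  simp only [neg_mul, neg_neg, neg_sq] at h
  have : ∫ t : ℝ, -(t * Real.exp (-(1/2) * t^2)) = ∫ t : ℝ, t * Real.exp (-(1/2) * t^2) := by
    simpa using h
  rw [integral_neg] at this
  linarith

private lemma gcl_e2 : ∫ t : ℝ, t^2 * Real.exp (-(1/2) * t^2) = Real.sqrt (2*π) := by
  have habs : ∫ t : ℝ, t^2 * Real.exp (-(1/2) * t^2)
      = ∫ t : ℝ, (fun u : ℝ => u^2 * Real.exp (-(1/2) * u^2)) |t| := by
    congr 1; funext t; simp [sq_abs]
  rw [habs, integral_comp_abs (f := fun u : ℝ => u^2 * Real.exp (-(1/2) * u^2))]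
  have hsub : ∫ x in Ioi (0:ℝ), x^2 * Real.exp (-(1/2) * x^2)
      = ∫ y in Ioi (0:ℝ), (1/2) * (Real.sqrt y * Real.exp (-(1/2) * y)) := by
    rw [← integral_comp_rpow_Ioi_of_pos
      (g := fun y : ℝ => (1/2) * (Real.sqrt y * Real.exp (-(1/2) * y))) (p := 2) (by norm_num)]
    refine setIntegral_congr_fun measurableSet_Ioi (fun x hx => ?_)
    have hx0 : (0:ℝ) < x := hx
    have h1 : (x : ℝ) ^ ((2:ℝ) - 1) = x := by norm_num
    have h2 : (x : ℝ) ^ (2:ℝ) = x ^ 2 := by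
      rw [show (2:ℝ) = ((2:ℕ):ℝ) by norm_num, Real.rpow_natCast]
    rw [smul_eq_mul, h1, h2, Real.sqrt_sq hx0.le]
    ring
  rw [hsub, integral_const_mul]
  have hgamma : ∫ y in Ioi (0:ℝ), Real.sqrt y * Real.exp (-(1/2) * y)
      = (1 / (1/2:ℝ)) ^ (3/2:ℝ) * Real.Gamma (3/2) := by
    rw [← integral_rpow_mul_exp_neg_mul_Ioi (a := 3/2) (r := 1/2) (by norm_num) (by norm_num)]
    refine setIntegral_congr_fun measurableSet_Ioi (fun y hy => ?_)
    rw [show (3/2 : ℝ) - 1 = 1/2 by norm_num, Real.sqrt_eq_rpow, neg_mul]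
  rw [hgamma]
  have hG : Real.Gamma (3/2) = Real.sqrt π / 2 := by
    rw [show (3/2 : ℝ) = 1/2 + 1 by norm_num, Real.Gamma_add_one (by norm_num),
      Real.Gamma_one_half_eq]
    ring
  have h32 : (1 / (1/2:ℝ)) ^ (3/2:ℝ) = 2 * Real.sqrt 2 := by
    rw [show (1 / (1/2:ℝ)) = 2 by norm_num, show (3/2:ℝ) = 1 + 1/2 by norm_num,
      Real.rpow_add (by norm_num), Real.rpow_one, ← Real.sqrt_eq_rpow]
  rw [hG, h32, Real.sqrt_mul (by norm_num)]
  ring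

/-! ### Standard Gaussian kernel on `Fin n → ℝ` -/

variable {n : ℕ}

/-- Unnormalized standard Gaussian kernel. -/
noncomputable def gclStdG (x : Fin n → ℝ) : ℝ := ∏ i, Real.exp (-(1/2) * x i ^ 2)

private lemma gclStdG_int : Integrable (gclStdG (n := n)) :=
  Integrable.fintype_prod (fun _ => gcl_i0)

private lemma gcl_g1 : ∫ x : Fin n → ℝ, gclStdG x = Real.sqrt (2*π) ^ n := by
  rw [show (fun x : Fin n → ℝ => gclStdG x)
      = fun x => ∏ i, (fun t => Real.exp (-(1/2) * t^2)) (x i) from rfl,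
    volume_pi, integral_fintype_prod_eq_pow (ι := Fin n) (fun t : ℝ => Real.exp (-(1/2) * t^2)), gcl_e0,
    Fintype.card_fin]

/-- Coordinate factor functions to express `x i * x j * gclStdG x` as a product. -/
noncomputable def gclCF (i j l : Fin n) : ℝ → ℝ :=
  fun t => (if l = i then t else 1) * ((if l = j then t else 1) * Real.exp (-(1/2) * t^2))

private lemma gclCF_int (i j l : Fin n) : Integrable (gclCF i j l) := by
  unfold gclCF
  rcases eq_or_ne l i with rfl | hi <;> rcases eq_or_ne l j with h | hj
  · subst h; simpa [sq, mul_assoc] using gcl_i2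
  · simp only [if_pos rfl, if_neg hj, one_mul]; simpa using gcl_i1
  · subst h; simp only [if_pos rfl, if_neg hi, one_mul]; simpa using gcl_i1
  · simp only [if_neg hi, if_neg hj, one_mul]; exact gcl_i0

private lemma gcl_prod_cf (i j : Fin n) (x : Fin n → ℝ) :
    ∏ l, gclCF i j l (x l) = x i * x j * gclStdG x := by
  unfold gclCF gclStdG
  rw [Finset.prod_mul_distrib, Finset.prod_mul_distrib]
  simp [Finset.prod_ite_eq' Finset.univ, mul_assoc]

private lemma gcl_g2_int (i j : Fin n) :
    Integrable (fun x : Fin n → ℝ => x i * x j * gclStdG x) := by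
  have := Integrable.fintype_prod (𝕜 := ℝ) (f := gclCF i j) (fun l => gclCF_int i j l)
  simpa only [gcl_prod_cf, volume_pi] using this

private lemma gcl_g2 (i j : Fin n) :
    ∫ x : Fin n → ℝ, x i * x j * gclStdG x
      = (if i = j then 1 else 0) * Real.sqrt (2*π) ^ n := by
  have h := integral_fintype_prod_volume_eq_prod (𝕜 := ℝ) (fun l => gclCF i j l)
  simp only [gcl_prod_cf] at h
  rw [h]
  rcases eq_or_ne i j with rfl | hij
  · rw [Finset.prod_eq_prod_diff_singleton_mul (Finset.mem_univ i)]
    have h1 : ∀ l ∈ Finset.univ \ {i}, (∫ t, gclCF i i l t) = Real.sqrt (2*π) := by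
      intro l hl
      rw [Finset.mem_sdiff, Finset.mem_singleton] at hl
      unfold gclCF
      simp only [if_neg hl.2, one_mul]
      exact gcl_e0
    rw [Finset.prod_congr rfl h1, Finset.prod_const]
    have h2 : (∫ t, gclCF i i i t) = Real.sqrt (2*π) := by
      unfold gclCF; simp only [if_pos rfl, ← mul_assoc, ← sq]
      simpa [sq, mul_assoc] using gcl_e2
    rw [h2, if_pos rfl, one_mul, Finset.card_sdiff_of_subset (by simp), Finset.card_univ, Fintype.card_fin,
      ← pow_succ]
    congr 1
    simp only [Finset.card_singleton]
    have := i.pos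
    omega
  · rw [if_neg hij, zero_mul]
    apply Finset.prod_eq_zero (Finset.mem_univ i)
    unfold gclCF
    simp only [if_pos rfl, if_neg hij]
    simpa [mul_comm] using gcl_e1

/-! ### Linear change of variables -/

private lemma gcl_cov {M : Matrix (Fin n) (Fin n) ℝ} (hM : M.det ≠ 0) (f : (Fin n → ℝ) → ℝ)
    (hf : Measurable f) :
    ∫ y : Fin n → ℝ, f y = |M.det| * ∫ x : Fin n → ℝ, f (M *ᵥ x) := by
  have hmap := Real.map_matrix_volume_pi_eq_smul_volume_pi hM
  have hT : Measurable (Matrix.toLin' M) :=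
    (LinearMap.continuous_on_pi _).measurable
  have h1 : ∫ x, f (M *ᵥ x) = ∫ y, f y ∂(Measure.map (Matrix.toLin' M) volume) := by
    rw [integral_map hT.aemeasurable hf.aestronglyMeasurable]
    simp [Matrix.toLin'_apply]
  rw [h1, hmap, integral_smul_measure]
  have habs : (0:ℝ) < |M.det| := abs_pos.mpr hM
  rw [ENNReal.toReal_ofReal (by positivity)]
  rw [abs_inv]
  rw [smul_eq_mul]
  field_simp

private lemma gcl_integrable_cov {M : Matrix (Fin n) (Fin n) ℝ} (hM : M.det ≠ 0)
    {f : (Fin n → ℝ) → ℝ} (hf : Measurable f)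
    (h : Integrable fun x => f (M *ᵥ x)) : Integrable f := by
  have hmap := Real.map_matrix_volume_pi_eq_smul_volume_pi hM
  have hT : Measurable (Matrix.toLin' M) := (LinearMap.continuous_on_pi _).measurable
  have h2 : Integrable f (Measure.map (Matrix.toLin' M) volume) := by
    rw [integrable_map_measure hf.aestronglyMeasurable hT.aemeasurable]
    simpa [Function.comp_def, Matrix.toLin'_apply] using h
  rw [hmap] at h2
  have hne : ENNReal.ofReal |M.det⁻¹| ≠ 0 := by
    simp [ENNReal.ofReal_eq_zero, abs_pos, not_le, inv_ne_zero hM, abs_pos.mpr (inv_ne_zero hM), hM]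
  exact (integrable_smul_measure hne ENNReal.ofReal_ne_top).mp h2

/-! ### Matrix helper lemmas -/

private lemma gcl_quad_transport (M A : Matrix (Fin n) (Fin n) ℝ) (x : Fin n → ℝ) :
    (M *ᵥ x) ⬝ᵥ (A *ᵥ (M *ᵥ x)) = x ⬝ᵥ ((Mᵀ * A * M) *ᵥ x) := by
  rw [mulVec_mulVec, dotProduct_mulVec (M *ᵥ x), ← vecMul_transpose, vecMul_vecMul,
    dotProduct_mulVec x, Matrix.mul_assoc]

private lemma gcl_measurable_quad (A : Matrix (Fin n) (Fin n) ℝ) :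
    Measurable fun y : Fin n → ℝ => y ⬝ᵥ (A *ᵥ y) := by
  simp only [dotProduct, mulVec]
  exact Finset.measurable_sum _ fun i _ =>
    ((measurable_pi_apply i).mul (Finset.measurable_sum _ fun j _ =>
      (measurable_const.mul (measurable_pi_apply j))))

/-- Positive semidefinite square root of a positive definite matrix. -/
noncomputable def gclB {S : Matrix (Fin n) (Fin n) ℝ} (hS : S.PosDef) :
    Matrix (Fin n) (Fin n) ℝ := CFC.sqrt S

private lemma gclB_mul_B {S : Matrix (Fin n) (Fin n) ℝ} (hS : S.PosDef) :
    gclB hS * gclB hS = S := CFC.sqrt_mul_sqrt_self S hS.posSemidef.nonneg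

private lemma gclB_herm {S : Matrix (Fin n) (Fin n) ℝ} (hS : S.PosDef) :
    (gclB hS)ᵀ = gclB hS := (CFC.sqrt_nonneg S).posSemidef.1

private lemma gclB_det_sq {S : Matrix (Fin n) (Fin n) ℝ} (hS : S.PosDef) :
    (gclB hS).det * (gclB hS).det = S.det := by
  rw [← det_mul, gclB_mul_B]

private lemma gclB_det_nonneg {S : Matrix (Fin n) (Fin n) ℝ} (hS : S.PosDef) :
    0 ≤ (gclB hS).det := by
  have h : (gclB hS).PosSemidef := (CFC.sqrt_nonneg S).posSemidef
  rw [h.1.det_eq_prod_eigenvalues]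
  exact Finset.prod_nonneg fun i _ => by simpa using h.eigenvalues_nonneg i

private lemma gclB_det_pos {S : Matrix (Fin n) (Fin n) ℝ} (hS : S.PosDef) :
    0 < (gclB hS).det := by
  rcases lt_or_eq_of_le (gclB_det_nonneg hS) with h | h
  · exact h
  · exfalso
    have h2 := gclB_det_sq hS
    rw [← h] at h2
    simp at h2
    exact (hS.det_pos.ne' h2.symm)

private lemma gclB_conj_inv {S : Matrix (Fin n) (Fin n) ℝ} (hS : S.PosDef) :
    (gclB hS) * S⁻¹ * (gclB hS) = 1 := by
  have h : S⁻¹ = (gclB hS)⁻¹ * (gclB hS)⁻¹ := by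
    rw [← Matrix.mul_inv_rev, gclB_mul_B]
  rw [h, ← Matrix.mul_assoc, Matrix.mul_assoc (gclB hS * (gclB hS)⁻¹),
    Matrix.mul_nonsing_inv _ (isUnit_iff_ne_zero.mpr (gclB_det_pos hS).ne'),
    Matrix.nonsing_inv_mul _ (isUnit_iff_ne_zero.mpr (gclB_det_pos hS).ne'), Matrix.one_mul]

end Auxiliary

section PDF

open Real Set
open scoped MatrixOrder

variable {n : ℕ} {S A : Matrix (Fin n) (Fin n) ℝ}

private lemma gcl_measurable_pdf (S : Matrix (Fin n) (Fin n) ℝ) :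
    Measurable (mvGaussianPdf S) := by
  unfold mvGaussianPdf
  exact (measurable_const.mul (((gcl_measurable_quad S⁻¹).const_mul _).exp))

private lemma gcl_pdf_sqrt_arg (hS : S.PosDef) (x : Fin n → ℝ) :
    mvGaussianPdf S (gclB hS *ᵥ x)
      = (2 * Real.pi) ^ (-(n : ℝ) / 2) * S.det ^ (-(1 : ℝ) / 2) * gclStdG x := by
  unfold mvGaussianPdf gclStdG
  congr 1
  rw [gcl_quad_transport, gclB_herm, gclB_conj_inv, one_mulVec]
  rw [← Real.exp_sum]
  congr 1
  simp only [dotProduct, Finset.mul_sum, sq]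

private lemma gcl_const_cancel (hS : S.PosDef) :
    (gclB hS).det * ((2 * Real.pi) ^ (-(n : ℝ) / 2) * S.det ^ (-(1 : ℝ) / 2)
      * Real.sqrt (2*π) ^ n) = 1 := by
  have h2π : (0:ℝ) < 2 * π := by positivity
  have hsq : Real.sqrt (2*π) ^ n = (2*π) ^ ((n:ℝ)/2) := by
    rw [Real.sqrt_eq_rpow, ← Real.rpow_natCast ((2*π) ^ ((1:ℝ)/2)) n, ← Real.rpow_mul h2π.le]
    rw [one_div, inv_mul_eq_div]
  have hdet : (gclB hS).det = S.det ^ ((1:ℝ)/2) := by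
    have := gclB_det_sq hS
    have hpos := gclB_det_pos hS
    rw [← Real.sqrt_eq_rpow]
    rw [show S.det = (gclB hS).det * (gclB hS).det from this.symm, Real.sqrt_mul_self hpos.le]
  rw [hsq, hdet]
  have e1 : (2*π) ^ (-(n:ℝ)/2) * (2*π) ^ ((n:ℝ)/2) = 1 := by
    rw [← Real.rpow_add h2π, show (-(n:ℝ)/2 + (n:ℝ)/2 : ℝ) = 0 by ring, Real.rpow_zero]
  have e2 : S.det ^ ((1:ℝ)/2) * S.det ^ (-(1:ℝ)/2) = 1 := by
    rw [← Real.rpow_add hS.det_pos, show ((1:ℝ)/2 + -(1:ℝ)/2 : ℝ) = 0 by ring, Real.rpow_zero]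
  calc S.det ^ ((1:ℝ)/2) * ((2*π) ^ (-(n:ℝ)/2) * S.det ^ (-(1:ℝ)/2) * (2*π) ^ ((n:ℝ)/2))
      = (S.det ^ ((1:ℝ)/2) * S.det ^ (-(1:ℝ)/2)) * ((2*π) ^ (-(n:ℝ)/2) * (2*π) ^ ((n:ℝ)/2)) := by
        ring
    _ = 1 := by rw [e1, e2, one_mul]

private lemma gcl_pdf_norm (hS : S.PosDef) : ∫ y : Fin n → ℝ, mvGaussianPdf S y = 1 := by
  rw [gcl_cov (gclB_det_pos hS).ne' _ (gcl_measurable_pdf S)]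
  have : ∀ x, mvGaussianPdf S (gclB hS *ᵥ x)
      = (2 * Real.pi) ^ (-(n : ℝ) / 2) * S.det ^ (-(1 : ℝ) / 2) * gclStdG x :=
    gcl_pdf_sqrt_arg hS
  simp only [this]
  rw [integral_const_mul, gcl_g1, abs_of_pos (gclB_det_pos hS), ← mul_assoc]
  calc (gclB hS).det * ((2 * Real.pi) ^ (-(n : ℝ) / 2) * S.det ^ (-(1 : ℝ) / 2))
        * Real.sqrt (2*π) ^ n
      = (gclB hS).det * ((2 * Real.pi) ^ (-(n : ℝ) / 2) * S.det ^ (-(1 : ℝ) / 2)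
        * Real.sqrt (2*π) ^ n) := by ring
    _ = 1 := gcl_const_cancel hS

private lemma gcl_pdf_int (hS : S.PosDef) : Integrable (mvGaussianPdf S) := by
  apply gcl_integrable_cov (gclB_det_pos hS).ne' (gcl_measurable_pdf S)
  simp only [gcl_pdf_sqrt_arg hS]
  exact gclStdG_int.const_mul _

private lemma gcl_quad_stdG_int (M : Matrix (Fin n) (Fin n) ℝ) :
    Integrable (fun x : Fin n → ℝ => (x ⬝ᵥ (M *ᵥ x)) * gclStdG x) := by
  have : (fun x : Fin n → ℝ => (x ⬝ᵥ (M *ᵥ x)) * gclStdG x)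
      = fun x => ∑ i, ∑ j, M i j * (x i * x j * gclStdG x) := by
    funext x
    simp only [dotProduct, mulVec, Finset.sum_mul, Finset.mul_sum]
    congr 1; funext i; congr 1; funext j; ring
  rw [this]
  exact integrable_finset_sum _ fun i _ =>
    integrable_finset_sum _ fun j _ => (gcl_g2_int i j).const_mul _

private lemma gcl_quad_stdG (M : Matrix (Fin n) (Fin n) ℝ) :
    ∫ x : Fin n → ℝ, (x ⬝ᵥ (M *ᵥ x)) * gclStdG x = M.trace * Real.sqrt (2*π) ^ n := by
  have h : (fun x : Fin n → ℝ => (x ⬝ᵥ (M *ᵥ x)) * gclStdG x)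
      = fun x => ∑ i, ∑ j, M i j * (x i * x j * gclStdG x) := by
    funext x
    simp only [dotProduct, mulVec, Finset.sum_mul, Finset.mul_sum]
    congr 1; funext i; congr 1; funext j; ring
  rw [h]
  refine (integral_finset_sum _ fun i _ =>
    integrable_finset_sum _ fun j _ => (gcl_g2_int i j).const_mul _).trans ?_
  have : ∀ i ∈ Finset.univ, (∫ x : Fin n → ℝ, ∑ j, M i j * (x i * x j * gclStdG x))
      = M i i * Real.sqrt (2*π) ^ n := by
    intro i _
    rw [integral_finset_sum _ fun j _ => (gcl_g2_int i j).const_mul _]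
    have : ∀ j ∈ Finset.univ, (∫ x : Fin n → ℝ, M i j * (x i * x j * gclStdG x))
        = M i j * ((if i = j then 1 else 0) * Real.sqrt (2*π) ^ n) := by
      intro j _
      rw [integral_const_mul, gcl_g2]
    rw [Finset.sum_congr rfl this]
    simp [Finset.sum_ite_eq, mul_comm]
  rw [Finset.sum_congr rfl this, Matrix.trace, ← Finset.sum_mul]
  rfl

private lemma gcl_quad_pdf_int (hS : S.PosDef) (M : Matrix (Fin n) (Fin n) ℝ) :
    Integrable (fun y : Fin n → ℝ => (y ⬝ᵥ (M *ᵥ y)) * mvGaussianPdf S y) := by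
  apply gcl_integrable_cov (gclB_det_pos hS).ne'
    ((gcl_measurable_quad M).mul (gcl_measurable_pdf S))
  simp only [Pi.mul_apply, gcl_pdf_sqrt_arg hS, gcl_quad_transport, gclB_herm]
  have : (fun x : Fin n → ℝ => (x ⬝ᵥ ((gclB hS * M * gclB hS) *ᵥ x)) *
      ((2 * Real.pi) ^ (-(n : ℝ) / 2) * S.det ^ (-(1 : ℝ) / 2) * gclStdG x))
      = fun x => ((2 * Real.pi) ^ (-(n : ℝ) / 2) * S.det ^ (-(1 : ℝ) / 2)) *
        ((x ⬝ᵥ ((gclB hS * M * gclB hS) *ᵥ x)) * gclStdG x) := by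
    funext x; ring
  rw [this]
  exact (gcl_quad_stdG_int _).const_mul _

private lemma gcl_quad_pdf (hS : S.PosDef) (M : Matrix (Fin n) (Fin n) ℝ) :
    ∫ y : Fin n → ℝ, (y ⬝ᵥ (M *ᵥ y)) * mvGaussianPdf S y = (M * S).trace := by
  rw [gcl_cov (gclB_det_pos hS).ne' (fun y => (y ⬝ᵥ (M *ᵥ y)) * mvGaussianPdf S y) ((gcl_measurable_quad M).mul (gcl_measurable_pdf S))]
  simp only [gcl_pdf_sqrt_arg hS, gcl_quad_transport, gclB_herm]
  have h : (fun x : Fin n → ℝ => (x ⬝ᵥ ((gclB hS * M * gclB hS) *ᵥ x)) *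
      ((2 * Real.pi) ^ (-(n : ℝ) / 2) * S.det ^ (-(1 : ℝ) / 2) * gclStdG x))
      = fun x => ((2 * Real.pi) ^ (-(n : ℝ) / 2) * S.det ^ (-(1 : ℝ) / 2)) *
        ((x ⬝ᵥ ((gclB hS * M * gclB hS) *ᵥ x)) * gclStdG x) := by
    funext x; ring
  simp only [h]
  rw [integral_const_mul, gcl_quad_stdG, abs_of_pos (gclB_det_pos hS)]
  have htr : (gclB hS * M * gclB hS).trace = (M * S).trace := by
    rw [trace_mul_cycle, gclB_mul_B hS, trace_mul_comm]
  rw [htr]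
  have hcc := gcl_const_cancel hS
  calc (gclB hS).det * ((2 * Real.pi) ^ (-(n:ℝ) / 2) * S.det ^ (-(1:ℝ) / 2) *
        ((M * S).trace * Real.sqrt (2*π) ^ n))
      = ((gclB hS).det * ((2 * Real.pi) ^ (-(n:ℝ) / 2) * S.det ^ (-(1:ℝ) / 2) *
        Real.sqrt (2*π) ^ n)) * (M * S).trace := by ring
    _ = (M * S).trace := by rw [hcc, one_mul]

private lemma gcl_log_pdf (hA : A.PosDef) (y : Fin n → ℝ) :
    Real.log (mvGaussianPdf A y)
      = ((-(n:ℝ)/2) * Real.log (2*π) + (-(1:ℝ)/2) * Real.log A.det)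
        + (-(1/2)) * (y ⬝ᵥ (A⁻¹ *ᵥ y)) := by
  unfold mvGaussianPdf
  have h1 : (0:ℝ) < (2 * Real.pi) ^ (-(n : ℝ) / 2) := Real.rpow_pos_of_pos (by positivity) _
  have h2 : (0:ℝ) < A.det ^ (-(1 : ℝ) / 2) := Real.rpow_pos_of_pos hA.det_pos _
  rw [Real.log_mul (by positivity) (Real.exp_ne_zero _), Real.log_mul h1.ne' h2.ne',
    Real.log_exp, Real.log_rpow (by positivity), Real.log_rpow hA.det_pos]

private lemma gcl_block_integral (hA : A.PosDef) (hS : S.PosDef) :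
    ∫ y : Fin n → ℝ, Real.log (mvGaussianPdf A y) * mvGaussianPdf S y
      = ((-(n:ℝ)/2) * Real.log (2*π) + (-(1:ℝ)/2) * Real.log A.det)
        + (-(1/2)) * (A⁻¹ * S).trace := by
  have h : (fun y : Fin n → ℝ => Real.log (mvGaussianPdf A y) * mvGaussianPdf S y)
      = fun y => ((-(n:ℝ)/2) * Real.log (2*π) + (-(1:ℝ)/2) * Real.log A.det) * mvGaussianPdf S y
        + (-(1/2)) * ((y ⬝ᵥ (A⁻¹ *ᵥ y)) * mvGaussianPdf S y) := by
    funext y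
    rw [gcl_log_pdf hA]
    ring
  rw [h, integral_add ((gcl_pdf_int hS).const_mul _) (((gcl_quad_pdf_int hS A⁻¹)).const_mul _),
    integral_const_mul, integral_const_mul, gcl_pdf_norm hS, gcl_quad_pdf hS A⁻¹, mul_one]

private lemma gclB_conj_posdef (hA : A.PosDef) (hS : S.PosDef) :
    (gclB hS * A⁻¹ * gclB hS).PosDef := by
  have hAinv := hA.inv
  refine PosDef.of_dotProduct_mulVec_pos ?_ ?_
  · have h := isHermitian_mul_mul_conjTranspose (gclB hS) hAinv.1
    have hBH : (gclB hS)ᴴ = gclB hS := (CFC.sqrt_nonneg S).posSemidef.1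
    rw [hBH] at h
    exact h
  · intro x hx
    have hBx : gclB hS *ᵥ x ≠ 0 := by
      intro h
      apply hx
      have h2 := congrArg (fun v => (gclB hS)⁻¹ *ᵥ v) h
      simpa [mulVec_mulVec, Matrix.nonsing_inv_mul _ (gclB_det_pos hS).ne'.isUnit,
        one_mulVec] using h2
    have := hAinv.dotProduct_mulVec_pos hBx
    rw [star_trivial] at this ⊢
    rw [gcl_quad_transport, gclB_herm hS] at this
    exact this

private lemma gcl_key_ineq (hA : A.PosDef) (hS : S.PosDef) :
    Real.log S.det + (n:ℝ) ≤ Real.log A.det + (A⁻¹ * S).trace ∧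
    (A ≠ S → Real.log S.det + (n:ℝ) < Real.log A.det + (A⁻¹ * S).trace) := by
  set C := gclB hS * A⁻¹ * gclB hS with hCdef
  have hC : C.PosDef := gclB_conj_posdef hA hS
  set lam := hC.1.eigenvalues with hlam
  have hpos : ∀ i, 0 < lam i := hC.eigenvalues_pos
  have htrC : C.trace = ∑ i, lam i := by
    conv_lhs => rw [hC.1.spectral_theorem, Unitary.conjStarAlgAut_apply]
    rw [trace_mul_cycle]
    rw [(Matrix.mem_unitaryGroup_iff').mp (hC.1.eigenvectorUnitary).2, Matrix.one_mul,
      trace_diagonal]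
    simp
    rfl
  have htrAS : C.trace = (A⁻¹ * S).trace := by
    rw [hCdef, trace_mul_cycle, gclB_mul_B hS, trace_mul_comm]
  have hdetC : C.det = ∏ i, lam i := by
    have := hC.1.det_eq_prod_eigenvalues
    simpa using this
  have hdetC' : C.det = S.det * A.det⁻¹ := by
    rw [hCdef, det_mul, det_mul, det_nonsing_inv, Ring.inverse_eq_inv]
    calc (gclB hS).det * A.det⁻¹ * (gclB hS).det
        = ((gclB hS).det * (gclB hS).det) * A.det⁻¹ := by ring
      _ = S.det * A.det⁻¹ := by rw [gclB_det_sq hS]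
  have hlogdet : Real.log S.det - Real.log A.det = ∑ i, Real.log (lam i) := by
    rw [← Real.log_prod (fun i _ => (hpos i).ne'), ← hdetC, hdetC',
      Real.log_mul hS.det_pos.ne' (inv_ne_zero hA.det_pos.ne'), Real.log_inv]
    ring
  have hterm : ∀ i, Real.log (lam i) ≤ lam i - 1 :=
    fun i => Real.log_le_sub_one_of_pos (hpos i)
  have hsum_le : ∑ i, Real.log (lam i) ≤ ∑ i, (lam i - 1) :=
    Finset.sum_le_sum fun i _ => hterm i
  have hsum1 : ∑ i : Fin n, (lam i - 1) = (∑ i, lam i) - n := by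
    rw [Finset.sum_sub_distrib]
    simp
  constructor
  · have hle := hsum_le
    rw [hsum1] at hle
    rw [← hlogdet] at hle
    have h2 : (A⁻¹ * S).trace = ∑ i, lam i := by rw [← htrAS, htrC]
    rw [h2]
    linarith
  · intro hne
    have hex : ∃ i, lam i ≠ 1 := by
      by_contra h
      push_neg at h
      have hC1 : C = 1 := by
        rw [hC.1.spectral_theorem, Unitary.conjStarAlgAut_apply]
        have hfun : (RCLike.ofReal ∘ lam : Fin n → ℝ) = fun _ => 1 := by
          funext i; simp [h i]
        rw [hfun, Matrix.diagonal_one, Matrix.mul_one]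
        exact (Matrix.mem_unitaryGroup_iff).mp (hC.1.eigenvectorUnitary).2
      apply hne
      have hAinvS : A⁻¹ = S⁻¹ := by
        have hBu := (gclB_det_pos hS).ne'.isUnit
        have hl : (gclB hS)⁻¹ * (gclB hS * A⁻¹ * gclB hS) * (gclB hS)⁻¹ = A⁻¹ := by
          rw [← Matrix.mul_assoc, ← Matrix.mul_assoc, Matrix.nonsing_inv_mul _ hBu,
            Matrix.one_mul, Matrix.mul_assoc, Matrix.mul_nonsing_inv _ hBu, Matrix.mul_one]
        have h2 : (gclB hS)⁻¹ * (gclB hS * A⁻¹ * gclB hS) * (gclB hS)⁻¹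
            = (gclB hS)⁻¹ * 1 * (gclB hS)⁻¹ := by rw [← hCdef, hC1]
        rw [hl, Matrix.mul_one, ← Matrix.mul_inv_rev, gclB_mul_B hS] at h2
        exact h2
      calc A = (A⁻¹)⁻¹ := (Matrix.nonsing_inv_nonsing_inv _ hA.det_pos.ne'.isUnit).symm
        _ = (S⁻¹)⁻¹ := by rw [hAinvS]
        _ = S := Matrix.nonsing_inv_nonsing_inv _ hS.det_pos.ne'.isUnit
    obtain ⟨i₀, hi₀⟩ := hex
    have hstrict : ∑ i, Real.log (lam i) < ∑ i, (lam i - 1) := by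
      apply Finset.sum_lt_sum (fun i _ => hterm i)
      exact ⟨i₀, Finset.mem_univ _, Real.log_lt_sub_one_of_pos (hpos i₀) hi₀⟩
    rw [hsum1, ← hlogdet] at hstrict
    have h2 : (A⁻¹ * S).trace = ∑ i, lam i := by rw [← htrAS, htrC]
    rw [h2]
    linarith

private lemma gcl_block_le (hA : A.PosDef) (hS : S.PosDef) :
    ∫ y : Fin n → ℝ, Real.log (mvGaussianPdf A y) * mvGaussianPdf S y
      ≤ ∫ y : Fin n → ℝ, Real.log (mvGaussianPdf S y) * mvGaussianPdf S y := by
  rw [gcl_block_integral hA hS, gcl_block_integral hS hS]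
  have hSS : (S⁻¹ * S).trace = (n:ℝ) := by
    rw [Matrix.nonsing_inv_mul S hS.det_pos.ne'.isUnit, Matrix.trace_one]
    simp
  rw [hSS]
  have := (gcl_key_ineq hA hS).1
  linarith

private lemma gcl_block_lt (hA : A.PosDef) (hS : S.PosDef) (hne : A ≠ S) :
    ∫ y : Fin n → ℝ, Real.log (mvGaussianPdf A y) * mvGaussianPdf S y
      < ∫ y : Fin n → ℝ, Real.log (mvGaussianPdf S y) * mvGaussianPdf S y := by
  rw [gcl_block_integral hA hS, gcl_block_integral hS hS]
  have hSS : (S⁻¹ * S).trace = (n:ℝ) := by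
    rw [Matrix.nonsing_inv_mul S hS.det_pos.ne'.isUnit, Matrix.trace_one]
    simp
  rw [hSS]
  have := (gcl_key_ineq hA hS).2 hne
  linarith

end PDF

/-- Identification in Gaussian composite likelihood: if the selected autocovariances
`γ_{k_j(i₁) − k_j(i₂)}(θ)` (over the tuples `k_1, …, k_K` included in the composite
likelihood) determine `θ` — i.e. the map from `θ` to these covariances is injective
at `θ₀` — then `θ₀` is the unique maximizer of
`θ ↦ E_{θ₀}[∑_j log f_{k_j}(Y^{k_j}; θ)]`, where `f_{k_j}` is the Gaussian density of
the subvector indexed by the tuple `k_j`. -/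
theorem stmt_17 {Θ : Type*} (γ : Θ → ℝ → ℝ) (θ₀ : Θ)
    (K : ℕ) (q : Fin K → ℕ) (k : (j : Fin K) → Fin (q j) → ℝ)
    (hpd : ∀ θ (j : Fin K),
      (Matrix.of fun i₁ i₂ : Fin (q j) => γ θ (k j i₁ - k j i₂)).PosDef)
    (hid : ∀ θ : Θ,
      (∀ (j : Fin K) (i₁ i₂ : Fin (q j)),
        γ θ (k j i₁ - k j i₂) = γ θ₀ (k j i₁ - k j i₂)) → θ = θ₀) :
    ∀ θ : Θ, θ ≠ θ₀ →
      (∑ j : Fin K, ∫ y : Fin (q j) → ℝ,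
          Real.log (mvGaussianPdf (Matrix.of fun i₁ i₂ => γ θ (k j i₁ - k j i₂)) y) *
            mvGaussianPdf (Matrix.of fun i₁ i₂ => γ θ₀ (k j i₁ - k j i₂)) y) <
      ∑ j : Fin K, ∫ y : Fin (q j) → ℝ,
          Real.log (mvGaussianPdf (Matrix.of fun i₁ i₂ => γ θ₀ (k j i₁ - k j i₂)) y) *
            mvGaussianPdf (Matrix.of fun i₁ i₂ => γ θ₀ (k j i₁ - k j i₂)) y := by
  intro θ hθ
  have hnotall : ¬ ∀ (j : Fin K) (i₁ i₂ : Fin (q j)),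
      γ θ (k j i₁ - k j i₂) = γ θ₀ (k j i₁ - k j i₂) := fun h => hθ (hid θ h)
  push_neg at hnotall
  obtain ⟨j₀, i₁, i₂, hne⟩ := hnotall
  apply Finset.sum_lt_sum
  · intro j _
    exact gcl_block_le (hpd θ j) (hpd θ₀ j)
  · refine ⟨j₀, Finset.mem_univ _, ?_⟩
    apply gcl_block_lt (hpd θ j₀) (hpd θ₀ j₀)
    intro hM
    apply hne
    have := congrFun (congrFun hM i₁) i₂
    simpa using this
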